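/- Let q, m, ℓ be positive integers with q ≤ m, and set δ = 2^{-2q} (so √δ·2^q = 1). Let g₁,…,g_ℓ : {-1,1}^q × {-1,1}^{m-q} → {-1,1} be Boolean functions such that for each i, |{(χ,ρ) : g_i(χ,ρ) = 1}| ≤ δ·2^m. Let T = {ρ ∈ {-1,1}^{m-q} : there exists i such that χ ↦ g_i(χ,ρ) is not the constant function −1} and let T^c = {-1,1}^{m-q} \ T. Then 2^q·|T| + |T^c| ≤ (ℓ+1)·√δ·2^m. -/

import Mathlib

/-- The combinatorial core of the running-time analysis of the minority-assignment
enumeration algorithm 𝒜₃ of Lemma 3.1: with `δ = 2^{-2q}` (so `√δ·2^q = 1`), if each of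
`g₁,…,g_ℓ` outputs `1` on at most `δ·2^m` inputs, `T` is the set of restrictions `ρ` of
the last `m-q` variables for which some `g_{i,ρ}` is not the constant `-1`, and `T^c` is
its complement, then `2^q·|T| + |T^c| ≤ (ℓ+1)·√δ·2^m`. -/
theorem minority_enumeration_work_bound (m q ℓ : ℕ)
    (hq : 0 < q) (hqm : q ≤ m) (hℓ : 0 < ℓ)
    (δ : ℝ) (hδ : δ = ((2 : ℝ) ^ (2 * q))⁻¹)
    (g : Fin ℓ → (Fin q → Bool) → (Fin (m - q) → Bool) → ℤ)
    (hg : ∀ i χ ρ, g i χ ρ = 1 ∨ g i χ ρ = -1)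
    (hclose : ∀ i : Fin ℓ,
      ((Finset.univ.filter
          (fun p : (Fin q → Bool) × (Fin (m - q) → Bool) => g i p.1 p.2 = 1)).card : ℝ)
        ≤ δ * 2 ^ m) :
    (2 : ℝ) ^ q *
        ((Finset.univ.filter
          (fun ρ : Fin (m - q) → Bool => ∃ i : Fin ℓ, ¬ ∀ χ, g i χ ρ = -1)).card : ℝ)
      + ((Finset.univ.filter
          (fun ρ : Fin (m - q) → Bool => ¬ ∃ i : Fin ℓ, ¬ ∀ χ, g i χ ρ = -1)).card : ℝ)
      ≤ (ℓ + 1) * Real.sqrt δ * 2 ^ m := by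
  classical
  set T := Finset.univ.filter
      (fun ρ : Fin (m - q) → Bool => ∃ i : Fin ℓ, ¬ ∀ χ, g i χ ρ = -1) with hT
  set Tc := Finset.univ.filter
      (fun ρ : Fin (m - q) → Bool => ¬ ∃ i : Fin ℓ, ¬ ∀ χ, g i χ ρ = -1) with hTc
  -- bound the per-i bad set
  have hper : ∀ i : Fin ℓ,
      ((Finset.univ.filter
        (fun ρ : Fin (m - q) → Bool => ¬ ∀ χ, g i χ ρ = -1)).card : ℝ) ≤ δ * 2 ^ m := by
    intro i
    refine le_trans ?_ (hclose i)
    have hmono : (Finset.univ.filter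
        (fun ρ : Fin (m - q) → Bool => ¬ ∀ χ, g i χ ρ = -1)).card ≤
        (Finset.univ.filter
          (fun p : (Fin q → Bool) × (Fin (m - q) → Bool) => g i p.1 p.2 = 1)).card := by
      apply Finset.card_le_card_of_injOn
        (fun ρ => ((if h : ∃ χ, g i χ ρ = 1 then h.choose else default), ρ))
      · intro ρ hρ
        simp only [Finset.mem_coe, Finset.mem_filter, Finset.mem_univ, true_and] at hρ ⊢
        push_neg at hρ
        obtain ⟨χ, hχ⟩ := hρ
        have hx : ∃ χ, g i χ ρ = 1 := ⟨χ, (hg i χ ρ).resolve_right hχ⟩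
        simp only [dif_pos hx]
        exact hx.choose_spec
      · intro a _ b _ h
        exact congrArg Prod.snd h
    exact_mod_cast hmono
  -- |T| ≤ ℓ * δ * 2^m
  have hTcard : (T.card : ℝ) ≤ ℓ * (δ * 2 ^ m) := by
    have hsub : T ⊆ Finset.univ.biUnion (fun i : Fin ℓ =>
        Finset.univ.filter (fun ρ : Fin (m - q) → Bool => ¬ ∀ χ, g i χ ρ = -1)) := by
      intro ρ hρ
      simp only [hT, Finset.mem_filter, Finset.mem_univ, true_and] at hρ
      obtain ⟨i, hi⟩ := hρ
      simp only [Finset.mem_biUnion, Finset.mem_filter, Finset.mem_univ, true_and]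
      exact ⟨i, hi⟩
    calc (T.card : ℝ) ≤ ((Finset.univ.biUnion (fun i : Fin ℓ =>
          Finset.univ.filter (fun ρ : Fin (m - q) → Bool => ¬ ∀ χ, g i χ ρ = -1))).card : ℝ) := by
          exact_mod_cast Finset.card_le_card hsub
      _ ≤ ∑ i : Fin ℓ, ((Finset.univ.filter
            (fun ρ : Fin (m - q) → Bool => ¬ ∀ χ, g i χ ρ = -1)).card : ℝ) := by
          exact_mod_cast Finset.card_biUnion_le
      _ ≤ ∑ _i : Fin ℓ, δ * 2 ^ m := Finset.sum_le_sum (fun i _ => hper i)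
      _ = ℓ * (δ * 2 ^ m) := by simp [mul_comm]
  -- |Tc| ≤ 2^(m-q)
  have hTccard : (Tc.card : ℝ) ≤ 2 ^ (m - q) := by
    have : Tc.card ≤ Fintype.card (Fin (m - q) → Bool) :=
      (Finset.card_filter_le _ _).trans_eq (by simp)
    have h2 : Fintype.card (Fin (m - q) → Bool) = 2 ^ (m - q) := by simp
    calc (Tc.card : ℝ) ≤ (Fintype.card (Fin (m - q) → Bool) : ℝ) := by exact_mod_cast this
      _ = 2 ^ (m - q) := by rw [h2]; push_cast; ring
  -- sqrt δ
  have h2q : (0:ℝ) < 2 ^ q := by positivity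
  have hsqrt : Real.sqrt δ = ((2:ℝ) ^ q)⁻¹ := by
    rw [hδ, two_mul, pow_add]
    have hsq : ((2:ℝ)^q * 2^q)⁻¹ = (((2:ℝ)^q)⁻¹)^2 := by rw [sq, mul_inv]
    rw [hsq, Real.sqrt_sq (by positivity)]
  have hpow : (2:ℝ) ^ (m - q) = 2 ^ m / 2 ^ q := by
    rw [eq_div_iff (ne_of_gt h2q), ← pow_add, Nat.sub_add_cancel hqm]
  have hδpos : 0 < δ := by rw [hδ]; positivity
  calc (2:ℝ) ^ q * T.card + Tc.card
      ≤ 2 ^ q * (ℓ * (δ * 2 ^ m)) + 2 ^ (m - q) := by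
        gcongr
    _ = (ℓ + 1) * ((2:ℝ)^q)⁻¹ * 2 ^ m := by
        rw [hδ, hpow, two_mul, pow_add]
        field_simp
    _ = (ℓ + 1) * Real.sqrt δ * 2 ^ m := by rw [hsqrt]
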